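/- The minimal faithful permutation degree of the Coxeter group W(B_n) = C_2 wr Sym(n) is 2n. -/

import Mathlib

noncomputable def minFaithfulDegree (G : Type*) [Group G] : ℕ :=
  sInf {n : ℕ | ∃ f : G →* Equiv.Perm (Fin n), Function.Injective f}

/-- The Coxeter group `W(B_n) = C₂ ≀ Sym(n)`, as the semidirect product of the base
group `(C₂)ⁿ` with `Sym(n)` permuting the coordinates. -/
abbrev WB (n : ℕ) : Type :=
  (Fin n → Multiplicative (ZMod 2)) ⋊[mulAutArrow] Equiv.Perm (Fin n)

/-- The product-of-signs homomorphism `W(B_n) → C₂`. -/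
noncomputable def signSum (n : ℕ) : WB n →* Multiplicative (ZMod 2) :=
  SemidirectProduct.lift
    (MonoidHom.mk' (fun f => ∏ i, f i) (by
      intro a b
      simp [Finset.prod_mul_distrib]))
    1
    (by
      intro σ
      refine MonoidHom.ext fun f => ?_
      simp only [MonoidHom.comp_apply, MulEquiv.coe_toMonoidHom, MonoidHom.mk'_apply,
        MulAut.conj_apply, MonoidHom.one_apply, mul_one, one_mul, inv_one]
      show (∏ i, mulAutArrow σ f i) = ∏ i, f i
      have h1 : ∀ i, mulAutArrow σ f i = f (σ⁻¹ i) := fun i => rfl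
      simp only [h1]
      exact Equiv.prod_comp σ⁻¹ f)

/-- The Coxeter group `W(D_n)`, the subgroup of even signed permutations in `W(B_n)`. -/
noncomputable abbrev WD (n : ℕ) : Subgroup (WB n) := (signSum n).ker

/- ### Auxiliary material -/

/-- `Equiv.permCongr` as a `MonoidHom`. -/
def permCongrHom' {α β : Type*} (e : α ≃ β) : Equiv.Perm α →* Equiv.Perm β where
  toFun p := (e.symm.trans p).trans e
  map_one' := by ext x; simp
  map_mul' p q := by ext x; simp

lemma permCongrHom'_injective {α β : Type*} (e : α ≃ β) :
    Function.Injective (permCongrHom' e) := by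
  intro p q h
  ext x
  have h1 := Equiv.ext_iff.mp h (e x)
  simp only [permCongrHom', MonoidHom.coe_mk, OneHom.coe_mk, Equiv.trans_apply,
    Equiv.symm_apply_apply] at h1
  exact e.injective h1

lemma two_mul_le_two_pow (c : ℕ) : 2 * c ≤ 2 ^ c := by
  cases c with
  | zero => simp
  | succ k =>
    rw [pow_succ, mul_comm (2 ^ k) 2]
    exact Nat.mul_le_mul_left 2 (Nat.lt_two_pow_self (n := k))

/-- The base group homomorphism for the natural action of `WB n` on
`Fin n × Multiplicative (ZMod 2)`. -/
def wbBase (n : ℕ) :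
    (Fin n → Multiplicative (ZMod 2)) →* Equiv.Perm (Fin n × Multiplicative (ZMod 2)) :=
  MonoidHom.mk'
    (fun f => Equiv.prodShear (Equiv.refl (Fin n)) (fun i => Equiv.mulLeft (f i)))
    (by
      intro a b
      ext x
      · rfl
      · simp [Equiv.prodShear, mul_assoc])

lemma wbBase_apply {n : ℕ} (f : Fin n → Multiplicative (ZMod 2))
    (x : Fin n × Multiplicative (ZMod 2)) : wbBase n f x = (x.1, f x.1 * x.2) := rfl

/-- The top group homomorphism for the natural action of `WB n` on
`Fin n × Multiplicative (ZMod 2)`. -/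
def wbTop (n : ℕ) :
    Equiv.Perm (Fin n) →* Equiv.Perm (Fin n × Multiplicative (ZMod 2)) :=
  MonoidHom.mk'
    (fun σ => Equiv.prodCongr σ (Equiv.refl _))
    (by
      intro a b
      ext x
      · rfl
      · rfl)

lemma wbTop_apply {n : ℕ} (σ : Equiv.Perm (Fin n))
    (x : Fin n × Multiplicative (ZMod 2)) : wbTop n σ x = (σ x.1, x.2) := rfl

/-- The natural faithful action of `WB n` on `Fin n × Multiplicative (ZMod 2)`. -/
noncomputable def wbPerm (n : ℕ) :
    WB n →* Equiv.Perm (Fin n × Multiplicative (ZMod 2)) :=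
  SemidirectProduct.lift (wbBase n) (wbTop n) (by
    intro σ
    refine MonoidHom.ext fun f => ?_
    refine Equiv.ext fun x => ?_
    show wbBase n (mulAutArrow σ f) x = (MulAut.conj (wbTop n σ)) (wbBase n f) x
    have h1 : mulAutArrow σ f = fun i => f (σ⁻¹ i) := rfl
    rw [MulAut.conj_apply, ← map_inv]
    rw [Equiv.Perm.mul_apply, Equiv.Perm.mul_apply]
    rw [wbBase_apply, wbTop_apply, wbBase_apply, wbTop_apply, h1]
    simp)

lemma wbPerm_injective (n : ℕ) : Function.Injective (wbPerm n) := by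
  rw [injective_iff_map_eq_one]
  rintro ⟨f, σ⟩ h
  have h1 : ∀ x : Fin n × Multiplicative (ZMod 2),
      wbBase n f (wbTop n σ x) = x := by
    intro x
    have := Equiv.ext_iff.mp h x
    simpa [wbPerm, SemidirectProduct.lift, Equiv.Perm.mul_apply] using this
  have hσ : σ = 1 := by
    refine Equiv.ext fun i => ?_
    have := congrArg Prod.fst (h1 (i, 1))
    simpa [wbBase_apply, wbTop_apply] using this
  have hf : f = 1 := by
    funext i
    have h2 := congrArg Prod.snd (h1 (i, 1))
    rw [wbTop_apply, wbBase_apply] at h2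
    simp only [hσ, Equiv.Perm.one_apply] at h2 ⊢
    simpa using h2
  ext <;> simp [hf, hσ]

/-- Upper bound: `WB n` acts faithfully on `2n` points. -/
lemma wb_upper (n : ℕ) :
    ∃ f : WB n →* Equiv.Perm (Fin (2 * n)), Function.Injective f := by
  have hcard : Fintype.card (Fin n × Multiplicative (ZMod 2)) = 2 * n := by
    simp [mul_comm]
  let e : (Fin n × Multiplicative (ZMod 2)) ≃ Fin (2 * n) :=
    Fintype.equivFinOfCardEq hcard
  exact ⟨(permCongrHom' e).comp (wbPerm n),
    (permCongrHom'_injective e).comp (wbPerm_injective n)⟩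

open MulAction in
/-- Lower bound for the elementary abelian base group: a faithful permutation
representation of `(C₂)ⁿ` has degree at least `2n`. -/
lemma elemAbelian_lower {n m : ℕ}
    (f : (Fin n → Multiplicative (ZMod 2)) →* Equiv.Perm (Fin m))
    (hf : Function.Injective f) : 2 * n ≤ m := by
  classical
  set E := Fin n → Multiplicative (ZMod 2) with hE
  letI : MulAction E (Fin m) := MulAction.compHom _ f
  have hsmul : ∀ (g : E) (x : Fin m), g • x = f g x := fun _ _ => rfl
  have hEcard : Nat.card E = 2 ^ n := by
    rw [hE, Nat.card_fun]
    simp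
  -- stabilizers are constant on orbits
  have hstab : ∀ (g : E) (x : Fin m), stabilizer E (g • x) = stabilizer E x := by
    intro g x
    ext h
    simp only [mem_stabilizer_iff]
    rw [smul_smul, mul_comm, ← smul_smul, smul_left_cancel_iff]
  set Ω := orbitRel.Quotient E (Fin m) with hΩ
  haveI : Fintype Ω := Fintype.ofFinite _
  set S : Ω → Subgroup E := fun ω => stabilizer E ω.out with hS
  haveI : ∀ ω : Ω, Fintype (E ⧸ S ω) := fun ω => Fintype.ofFinite _
  -- class formula
  have hcard : m = ∑ ω : Ω, Nat.card (E ⧸ S ω) := by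
    have h1 := Nat.card_congr (selfEquivSigmaOrbitsQuotientStabilizer E (Fin m))
    rw [Nat.card_eq_fintype_card (α := Fin m), Fintype.card_fin] at h1
    rw [h1, Nat.card_eq_fintype_card, Fintype.card_sigma]
    simp [Nat.card_eq_fintype_card]
    exact Finset.sum_congr rfl fun ω _ => Fintype.card_congr' rfl
  -- each quotient has 2-power order
  have hdvd : ∀ ω : Ω, Nat.card (E ⧸ S ω) ∣ 2 ^ n := fun ω => by
    rw [← hEcard]; exact Subgroup.card_quotient_dvd_card (S ω)
  choose c hcle hc2 using fun ω => (Nat.dvd_prime_pow Nat.prime_two).mp (hdvd ω)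
  -- faithfulness gives an embedding into the product of the quotients
  have hker : ∀ g : E, (∀ ω : Ω, g ∈ S ω) → g = 1 := by
    intro g hg
    apply hf
    rw [map_one]
    refine Equiv.ext fun x => ?_
    have hx : (⟦x⟧ : Ω).out ∈ orbit E x := Quotient.exact (Quotient.out_eq (⟦x⟧ : Ω))
    obtain ⟨g', hg'⟩ := hx
    have hSx : S (⟦x⟧ : Ω) = stabilizer E x := by
      rw [hS]
      simp only
      rw [← hg', hstab]
    have hgx : g • x = x := by
      have := hg (⟦x⟧ : Ω)
      rw [hSx, mem_stabilizer_iff] at this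
      exact this
    rw [hsmul] at hgx
    simpa using hgx
  have hinj2 : Function.Injective
      (Pi.monoidHom (fun ω : Ω => QuotientGroup.mk' (S ω))) := by
    rw [injective_iff_map_eq_one]
    intro g hg
    refine hker g fun ω => ?_
    have h1 : QuotientGroup.mk' (S ω) g = 1 := congrFun hg ω
    exact (QuotientGroup.eq_one_iff g).mp h1
  have hle : (2 : ℕ) ^ n ≤ ∏ ω : Ω, Nat.card (E ⧸ S ω) := by
    calc (2 : ℕ) ^ n = Nat.card E := hEcard.symm
      _ ≤ Nat.card (∀ ω : Ω, E ⧸ S ω) := Nat.card_le_card_of_injective _ hinj2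
      _ = ∏ ω : Ω, Nat.card (E ⧸ S ω) := Nat.card_pi
  have hsum : n ≤ ∑ ω : Ω, c ω := by
    have h2 : (2 : ℕ) ^ n ≤ 2 ^ (∑ ω : Ω, c ω) := by
      rw [← Finset.prod_pow_eq_pow_sum]
      calc (2 : ℕ) ^ n ≤ ∏ ω : Ω, Nat.card (E ⧸ S ω) := hle
        _ = ∏ ω : Ω, 2 ^ c ω := by
            exact Finset.prod_congr rfl fun ω _ => hc2 ω
    exact (Nat.pow_le_pow_iff_right (by norm_num)).mp h2
  calc 2 * n ≤ 2 * ∑ ω : Ω, c ω := Nat.mul_le_mul_left 2 hsum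
    _ = ∑ ω : Ω, 2 * c ω := Finset.mul_sum _ _ _
    _ ≤ ∑ ω : Ω, 2 ^ c ω := Finset.sum_le_sum fun ω _ => two_mul_le_two_pow _
    _ = ∑ ω : Ω, Nat.card (E ⧸ S ω) := Finset.sum_congr rfl fun ω _ => (hc2 ω).symm
    _ = m := hcard.symm

/-- The minimal faithful permutation degree of `W(B_n) = C₂ ≀ Sym(n)` is `2n`. -/
theorem mu_WB (n : ℕ) : minFaithfulDegree (WB n) = 2 * n := by
  obtain ⟨φ, hφ⟩ := wb_upper n
  have hmem : 2 * n ∈ {k : ℕ | ∃ f : WB n →* Equiv.Perm (Fin k), Function.Injective f} :=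
    ⟨φ, hφ⟩
  refine le_antisymm (Nat.sInf_le hmem) (le_csInf ⟨_, hmem⟩ ?_)
  rintro m ⟨f, hf⟩
  exact elemAbelian_lower (f.comp SemidirectProduct.inl)
    (hf.comp SemidirectProduct.inl_injective)
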